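/- arXiv:math/9904019 — 5 statements merged into one kernel-verified Lean document; each statement's English description precedes it below -/
import Mathlib

section
/- For any three complex numbers a, b, c there exist matrices A, B ∈ SL(2, ℂ) such that tr(A) = a, tr(B) = b, and tr(A·B) = c. -/
theorem sl2_trace_realization (a b c : ℂ) :
    ∃ A B : Matrix.SpecialLinearGroup (Fin 2) ℂ,
      Matrix.trace (A : Matrix (Fin 2) (Fin 2) ℂ) = a ∧
      Matrix.trace (B : Matrix (Fin 2) (Fin 2) ℂ) = b ∧
      Matrix.trace ((A * B : Matrix.SpecialLinearGroup (Fin 2) ℂ) : Matrix (Fin 2) (Fin 2) ℂ) = c := by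
  obtain ⟨s, hs⟩ : ∃ s : ℂ, s ^ 2 = c ^ 2 - 4 := IsAlgClosed.exists_pow_nat_eq (c ^ 2 - 4) zero_lt_two
  set x : ℂ := (c + s) / 2 with hx
  have hmul : x * ((c - s) / 2) = 1 := by
    field_simp [hx]
    ring_nf
    rw [hx]; linear_combination (-1/2 : ℂ) * hs
  have hx0 : x ≠ 0 := left_ne_zero_of_mul_eq_one hmul
  have hinv : x⁻¹ = (c - s) / 2 := eq_inv_of_mul_eq_one_left (by rw [mul_comm]; exact hmul) |>.symm
  refine ⟨⟨!![a, -1; 1, 0], by simp [Matrix.det_fin_two_of]⟩,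
    ⟨!![0, x; -x⁻¹, b], by simp [Matrix.det_fin_two_of, hx0]⟩, ?_, ?_, ?_⟩
  · simp [Matrix.trace_fin_two_of]
  · simp [Matrix.trace_fin_two_of]
  · show Matrix.trace ((!![a, -1; 1, 0] : Matrix (Fin 2) (Fin 2) ℂ) * !![0, x; -x⁻¹, b]) = c
    rw [Matrix.mul_fin_two, Matrix.trace_fin_two_of, hinv]
    field_simp
    ring
end

section
/- For any A₁, A₂, A₃ ∈ SL(2, ℂ), setting aᵢ = tr(Aᵢ), a_{ij} = tr(Aᵢ·Aⱼ), and a₁₂₃ = tr(A₁·A₂·A₃), the following polynomial relation holds: a₁₂₃² - a₁₂₃·(a₁·a₂₃ + a₂·a₃₁ + a₃·a₁₂ - a₁·a₂·a₃) + a₁² + a₂² + a₃² + a₁₂² + a₂₃² + a₃₁² + a₁₂·a₂₃·a₃₁ - a₁·a₂·a₁₂ - a₂·a₃·a₂₃ - a₃·a₁·a₃₁ - 4 = 0. -/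
theorem sl2_fricke_vogt_relation (A₁ A₂ A₃ : Matrix.SpecialLinearGroup (Fin 2) ℂ) :
    let t : Matrix.SpecialLinearGroup (Fin 2) ℂ → ℂ :=
      fun M => Matrix.trace (M : Matrix (Fin 2) (Fin 2) ℂ)
    let a₁ := t A₁; let a₂ := t A₂; let a₃ := t A₃
    let a₁₂ := t (A₁ * A₂); let a₂₃ := t (A₂ * A₃); let a₃₁ := t (A₃ * A₁)
    let a₁₂₃ := t (A₁ * A₂ * A₃)
    a₁₂₃ ^ 2 - a₁₂₃ * (a₁ * a₂₃ + a₂ * a₃₁ + a₃ * a₁₂ - a₁ * a₂ * a₃) +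
      a₁ ^ 2 + a₂ ^ 2 + a₃ ^ 2 + a₁₂ ^ 2 + a₂₃ ^ 2 + a₃₁ ^ 2 + a₁₂ * a₂₃ * a₃₁ -
      a₁ * a₂ * a₁₂ - a₂ * a₃ * a₂₃ - a₃ * a₁ * a₃₁ - 4 = 0 := by
  intro t a₁ a₂ a₃ a₁₂ a₂₃ a₃₁ a₁₂₃
  have h1 : (A₁.1 0 0) * (A₁.1 1 1) - (A₁.1 0 1) * (A₁.1 1 0) = 1 := by
    have := A₁.2; rwa [Matrix.det_fin_two] at this
  set xa1 := A₁.1 0 0 with hxa1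
  set xb1 := A₁.1 0 1 with hxb1
  set xc1 := A₁.1 1 0 with hxc1
  set xd1 := A₁.1 1 1 with hxd1
  have h2 : (A₂.1 0 0) * (A₂.1 1 1) - (A₂.1 0 1) * (A₂.1 1 0) = 1 := by
    have := A₂.2; rwa [Matrix.det_fin_two] at this
  set xa2 := A₂.1 0 0 with hxa2
  set xb2 := A₂.1 0 1 with hxb2
  set xc2 := A₂.1 1 0 with hxc2
  set xd2 := A₂.1 1 1 with hxd2
  have h3 : (A₃.1 0 0) * (A₃.1 1 1) - (A₃.1 0 1) * (A₃.1 1 0) = 1 := by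
    have := A₃.2; rwa [Matrix.det_fin_two] at this
  set xa3 := A₃.1 0 0 with hxa3
  set xb3 := A₃.1 0 1 with hxb3
  set xc3 := A₃.1 1 0 with hxc3
  set xd3 := A₃.1 1 1 with hxd3
  simp only [a₁₂₃, a₁₂, a₂₃, a₃₁, a₁, a₂, a₃, t, Matrix.SpecialLinearGroup.coe_mul,
    Matrix.trace_fin_two, Matrix.mul_apply, Fin.sum_univ_two]
  linear_combination ((2:ℂ) + (-1:ℂ)*xd3^2 + (-1:ℂ)*xa3^2 + (-1:ℂ)*xd2^2 + xd2^2*xa3*xd3 + (-1:ℂ)*xc2*xd2*xb3*xd3 + xc2*xd2*xa3*xb3 + (-1:ℂ)*xc2^2*xb3^2 + (-1:ℂ)*xb2*xd2*xc3*xd3 + xb2*xd2*xa3*xc3 + (-1:ℂ)*xb2^2*xc3^2 + xa2*xd2*xd3^2 + (-2:ℂ)*xa2*xd2*xa3*xd3 + xa2*xd2*xa3^2 + xa2*xc2*xb3*xd3 + (-1:ℂ)*xa2*xc2*xa3*xb3 + xa2*xb2*xc3*xd3 + (-1:ℂ)*xa2*xb2*xa3*xc3 + (-1:ℂ)*xa2^2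 + xa2^2*xa3*xd3) * h1 + ((2:ℂ) + (-2:ℂ)*xa3*xd3 + (-1:ℂ)*xd1^2 + xd1^2*xa3*xd3 + (-1:ℂ)*xc1*xd1*xb3*xd3 + xc1*xd1*xa3*xb3 + (-1:ℂ)*xc1^2*xb3^2 + (-1:ℂ)*xb1*xd1*xc3*xd3 + xb1*xd1*xa3*xc3 + xb1*xc1*xd3^2 + (-2:ℂ)*xb1*xc1*xa3*xd3 + xb1*xc1*xa3^2 + (-1:ℂ)*xb1^2*xc3^2 + xa1*xc1*xb3*xd3 + (-1:ℂ)*xa1*xc1*xa3*xb3 + xa1*xb1*xc3*xd3 + (-1:ℂ)*xa1*xb1*xa3*xc3 + (-1:ℂ)*xa1^2 + xa1^2*xa3*xd3) * h2 + ((-2:ℂ)*xb2*xc2 + xd1^2*xb2*xc2 + (-1:ℂ)*xc1*xd1*xb2*xd2 + xc1*xd1*xa2*xb2 + (-1:ℂ)*xc1^2*xb2^2 + (-1:ℂ)*xb1*xd1*xc2*xd2 + xb1*xd1*xa2*xc2 + (-2:ℂ)*xb1*xc1 + xb1*xc1*xd2^2 + (-2:ℂ)*xb1*xc1*xb2*xc2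 + xb1*xc1*xa2^2 + (-1:ℂ)*xb1^2*xc2^2 + xa1*xc1*xb2*xd2 + (-1:ℂ)*xa1*xc1*xa2*xb2 + xa1*xb1*xc2*xd2 + (-1:ℂ)*xa1*xb1*xa2*xc2 + xa1^2*xb2*xc2) * h3
end

section
/- The principal congruence subgroup of level 2 in SL(2, ℤ), consisting of matrices congruent to the identity modulo 2, contains the matrices T = [[1,2],[0,1]] and S = [[1,0],[-2,1]], and every matrix in it with ±identity quotiented out lies in the subgroup generated by T, S and -I; in particular T and S generate a free group of rank 2 in PSL(2, ℤ). -/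
open Matrix MatrixGroups

abbrev SLZ := Matrix.SpecialLinearGroup (Fin 2) ℤ

abbrev VV := {v : Fin 2 → ℤ // v ≠ 0}

def negVV (v : VV) : VV := ⟨-v.1, by simpa using v.2⟩

instance projSetoid : Setoid VV where
  r u w := u = w ∨ u = negVV w
  iseqv := by
    constructor
    · exact fun u => Or.inl rfl
    · rintro u w (h | h) <;> subst h <;> simp [negVV, Subtype.ext_iff]
    · rintro u w z (h | h) (h' | h') <;> subst h <;> subst h' <;>
        simp [negVV, Subtype.ext_iff]

abbrev PV := Quotient projSetoid

def permOf (g : SLZ) : VV ≃ VV :=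
  (Matrix.SpecialLinearGroup.toLin' g).toEquiv.subtypeEquiv (fun v => by
    constructor
    · intro hv h; exact hv (by simpa using (LinearEquiv.map_eq_zero_iff (Matrix.SpecialLinearGroup.toLin' g)).mp h)
    · intro hv h; exact hv (by simp [h]))

lemma permOf_apply (g : SLZ) (v : VV) :
    (permOf g v : Fin 2 → ℤ) = (g : Matrix (Fin 2) (Fin 2) ℤ).mulVec v.1 := by
  simp [permOf, Matrix.SpecialLinearGroup.toLin'_apply, Matrix.toLin'_apply]

lemma permOf_neg (g : SLZ) (v : VV) : permOf g (negVV v) = negVV (permOf g v) := by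
  apply Subtype.ext
  simp [permOf_apply, negVV, Matrix.mulVec_neg]

lemma permOf_mul (g h : SLZ) (v : VV) : permOf (g * h) v = permOf g (permOf h v) := by
  apply Subtype.ext
  rw [permOf_apply, permOf_apply, permOf_apply, Matrix.SpecialLinearGroup.coe_mul,
    Matrix.mulVec_mulVec]

lemma permOf_one (v : VV) : permOf 1 v = v := by
  apply Subtype.ext
  simp [permOf_apply]

def pact : SLZ →* Equiv.Perm PV where
  toFun g := Quotient.congr (permOf g) (by
    intro u w
    constructor
    · rintro (h | h) <;> subst h
      · exact Or.inl rfl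
      · exact Or.inr (permOf_neg g w)
    · rintro (h | h)
      · exact Or.inl ((permOf g).injective h)
      · exact Or.inr ((permOf g).injective (by rw [h, permOf_neg])))
  map_one' := by
    ext x
    induction x using Quotient.ind with
    | _ v =>
      show (⟦permOf 1 v⟧ : PV) = ⟦v⟧
      rw [permOf_one]
  map_mul' g h := by
    ext x
    induction x using Quotient.ind with
    | _ v =>
      show (⟦permOf (g * h) v⟧ : PV) = ⟦permOf g (permOf h v)⟧
      rw [permOf_mul]

lemma pact_mk (g : SLZ) (v : VV) : pact g ⟦v⟧ = ⟦permOf g v⟧ := rfl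

lemma center_le_ker_pact : Subgroup.center SLZ ≤ pact.ker := by
  intro g hg
  obtain ⟨r, hr, hscalar⟩ := Matrix.SpecialLinearGroup.mem_center_iff.mp hg
  rw [Fintype.card_fin] at hr
  have hr' : r = 1 ∨ r = -1 := by
    have h : (r - 1) * (r + 1) = 0 := by ring_nf; linarith [hr]
    rcases mul_eq_zero.mp h with h | h
    · left; linarith
    · right; linarith
  have key : ∀ v : VV, permOf g v = v ∨ permOf g v = negVV v := by
    intro v
    have hmv : (permOf g v : Fin 2 → ℤ) = r • v.1 := by
      rw [permOf_apply, ← hscalar]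
      ext i; simp [Matrix.mulVec_diagonal]
    rcases hr' with h | h <;> subst h
    · left; apply Subtype.ext; simpa using hmv
    · right; apply Subtype.ext; rw [hmv]; show _ = -v.1; ext i; simp
  rw [MonoidHom.mem_ker]
  ext x
  induction x using Quotient.ind with
  | _ v =>
    show (⟦permOf g v⟧ : PV) = ⟦v⟧
    exact Quotient.sound (key v)

abbrev PSLZ := Matrix.ProjectiveSpecialLinearGroup (Fin 2) ℤ

def ppact : PSLZ →* Equiv.Perm PV :=
  QuotientGroup.lift (Subgroup.center SLZ) pact center_le_ker_pact

noncomputable instance : MulAction PSLZ PV := MulAction.compHom PV ppact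

lemma psl_smul (g : SLZ) (v : VV) :
    (QuotientGroup.mk' (Subgroup.center SLZ) g) • (⟦v⟧ : PV) = ⟦permOf g v⟧ := rfl

def TT : SLZ := ⟨!![1, 2; 0, 1], by decide⟩
def SS : SLZ := ⟨!![1, 0; -2, 1], by decide⟩

lemma permOf_TT (v : VV) : (permOf TT v : Fin 2 → ℤ) = ![v.1 0 + 2 * v.1 1, v.1 1] := by
  rw [permOf_apply]
  ext i
  fin_cases i <;>
    simp [TT, Matrix.mulVec, dotProduct, Fin.sum_univ_two] <;> ring

lemma permOf_SS (v : VV) : (permOf SS v : Fin 2 → ℤ) = ![v.1 0, v.1 1 - 2 * v.1 0] := by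
  rw [permOf_apply]
  ext i
  fin_cases i <;>
    simp [SS, Matrix.mulVec, dotProduct, Fin.sum_univ_two] <;> ring

def pA : PV → Prop :=
  Quotient.lift (fun v : VV => v.1 1 * v.1 1 < v.1 0 * v.1 0 ∧ 0 < v.1 0 * v.1 1)
    (by rintro u w (h | h) <;> subst h <;> simp [negVV] <;> constructor <;> exact fun h => h)

def pB : PV → Prop :=
  Quotient.lift (fun v : VV => v.1 0 * v.1 0 < v.1 1 * v.1 1 ∧ v.1 0 * v.1 1 < 0)
    (by rintro u w (h | h) <;> subst h <;> simp [negVV] <;> constructor <;> exact fun h => h)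

-- integer lemmas
lemma intL1 (x y : ℤ) (h1 : y * y < x * x) (h2 : 0 < x * y) :
    y * y < (x + 2 * y) * (x + 2 * y) ∧ 0 < (x + 2 * y) * y := by
  constructor <;> nlinarith
lemma intL2 (x y : ℤ) (h1 : x * x < y * y) (h2 : x * y < 0) :
    y * y < (x + 2 * y) * (x + 2 * y) ∧ 0 < (x + 2 * y) * y := by
  constructor <;> nlinarith
lemma intL3 (x y : ℤ) (h1 : y * y < x * x) :
    x * x < (y - 2 * x) * (y - 2 * x) ∧ x * (y - 2 * x) < 0 := by
  constructor <;> nlinarith [sq_nonneg (x + y), sq_nonneg (x - y), sq_nonneg x, sq_nonneg y]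
lemma intL4 (x y : ℤ) (h1 : x * x < y * y) (h2 : x * y < 0) :
    x * x < (y - 2 * x) * (y - 2 * x) ∧ x * (y - 2 * x) < 0 := by
  constructor <;> nlinarith
lemma intL5 (x y : ℤ) (h0 : ¬(x = 0 ∧ y = 0)) :
    (y * y < (x + 2 * y) * (x + 2 * y) ∧ 0 < (x + 2 * y) * y) ∨
    (x * x < (y - 2 * x) * (y - 2 * x) ∧ x * (y - 2 * x) < 0) := by
  rcases lt_trichotomy (x * x) (y * y) with h | h | h
  · left
    constructor <;> nlinarith [sq_nonneg (x + y), sq_nonneg (x - y)]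
  · -- x = y or x = -y, nonzero
    have hx0 : x ≠ 0 := by
      intro hx
      apply h0
      refine ⟨hx, ?_⟩
      subst hx
      nlinarith
    have hxx : 0 < x * x := by rcases lt_trichotomy x 0 with hc | hc | hc <;> first | nlinarith | exact absurd hc hx0
    have : (x - y) * (x + y) = 0 := by ring_nf; linarith
    rcases mul_eq_zero.mp this with h' | h'
    · have hxy : x = y := by linarith
      subst hxy
      left; constructor <;> nlinarith
    · have hxy : x = -y := by linarith
      subst hxy
      right; constructor <;> nlinarith
  · right
    exact intL3 x y h

noncomputable def aT : PSLZ := QuotientGroup.mk' (Subgroup.center SLZ) TT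
noncomputable def aS : PSLZ := QuotientGroup.mk' (Subgroup.center SLZ) SS

lemma pA_mk (v : VV) : pA ⟦v⟧ ↔ (v.1 1 * v.1 1 < v.1 0 * v.1 0 ∧ 0 < v.1 0 * v.1 1) := Iff.rfl
lemma pB_mk (v : VV) : pB ⟦v⟧ ↔ (v.1 0 * v.1 0 < v.1 1 * v.1 1 ∧ v.1 0 * v.1 1 < 0) := Iff.rfl

lemma smul_T_mk (v : VV) : aT • (⟦v⟧ : PV) = ⟦permOf TT v⟧ := rfl
lemma smul_S_mk (v : VV) : aS • (⟦v⟧ : PV) = ⟦permOf SS v⟧ := rfl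

lemma pA_T_smul (x : PV) (h : pA x) : pA (aT • x) := by
  induction x using Quotient.ind with
  | _ v =>
    rw [smul_T_mk, pA_mk] at *
    rw [permOf_TT]
    simp only [Matrix.cons_val_zero, Matrix.cons_val_one, Matrix.head_cons]
    exact intL1 _ _ h.1 h.2

lemma pB_T_smul (x : PV) (h : pB x) : pA (aT • x) := by
  induction x using Quotient.ind with
  | _ v =>
    rw [pB_mk] at h
    rw [smul_T_mk, pA_mk, permOf_TT]
    simp only [Matrix.cons_val_zero, Matrix.cons_val_one, Matrix.head_cons]
    exact intL2 _ _ h.1 h.2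

lemma pA_S_smul (x : PV) (h : pA x) : pB (aS • x) := by
  induction x using Quotient.ind with
  | _ v =>
    rw [pA_mk] at h
    rw [smul_S_mk, pB_mk, permOf_SS]
    simp only [Matrix.cons_val_zero, Matrix.cons_val_one, Matrix.head_cons]
    exact intL3 _ _ h.1

lemma pB_S_smul (x : PV) (h : pB x) : pB (aS • x) := by
  induction x using Quotient.ind with
  | _ v =>
    rw [pB_mk] at h
    rw [smul_S_mk, pB_mk, permOf_SS]
    simp only [Matrix.cons_val_zero, Matrix.cons_val_one, Matrix.head_cons]
    exact intL4 _ _ h.1 h.2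

lemma pTotal (x : PV) : pA (aT • x) ∨ pB (aS • x) := by
  induction x using Quotient.ind with
  | _ v =>
    rw [smul_T_mk, smul_S_mk, pA_mk, pB_mk, permOf_TT, permOf_SS]
    simp only [Matrix.cons_val_zero, Matrix.cons_val_one, Matrix.head_cons]
    apply intL5
    rintro ⟨h0, h1⟩
    apply v.2
    ext i
    fin_cases i <;> simpa using ‹_›

lemma free_part :
    Function.Injective
      (FreeGroup.lift (fun b : Bool => if b then aT else aS) :
        FreeGroup Bool →* PSLZ) := by
  have hAB : ∀ x : PV, pA x → pB x → False := by
    rintro x h1 h2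
    induction x using Quotient.ind with
    | _ v =>
      rw [pA_mk] at h1; rw [pB_mk] at h2
      exact absurd h1.1 (not_lt.mpr (le_of_lt h2.1))
  apply FreeGroup.injective_lift_of_ping_pong _
    (X := fun b => if b then {x | pA x} else {x | pB x})
    (Y := fun b => if b then {x | ¬ pA (aT • x)} else {x | ¬ pB (aS • x)})
  · -- nonempty
    intro b
    cases b
    · refine ⟨⟦⟨![1, -2], by intro h; simpa using congrFun h 0⟩⟧, ?_⟩
      simp only [Bool.false_eq_true, if_false, Set.mem_setOf_eq, pB_mk]
      norm_num
    · refine ⟨⟦⟨![2, 1], by intro h; simpa using congrFun h 0⟩⟧, ?_⟩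
      simp only [if_true, Set.mem_setOf_eq, pA_mk]
      norm_num
  · -- X pairwise disjoint
    intro i j hij
    cases i <;> cases j <;> simp_all [Set.disjoint_left, Set.mem_setOf_eq] <;>
      intro x h1 h2 <;> exact hAB x ‹_› ‹_›
  · -- Y pairwise disjoint
    intro i j hij
    have key : ∀ x : PV, ¬ pA (aT • x) → pB (aS • x) := by
      intro x h1
      rcases pTotal x with h | h
      exacts [absurd h h1, h]
    show Disjoint _ _
    rw [Set.disjoint_left]
    intro x hx
    cases i <;> cases j <;> simp only [Bool.false_eq_true, if_true, if_false,
      Set.mem_setOf_eq, not_not] at hx ⊢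
    · exact absurd rfl hij
    · by_contra hc; exact hx (key x hc)
    · exact key x hx
    · exact absurd rfl hij
  · -- XY disjoint
    intro i j
    show Disjoint _ _
    rw [Set.disjoint_left]
    intro x hx
    cases i <;> cases j <;>
      simp only [Bool.false_eq_true, if_true, if_false, Set.mem_setOf_eq, not_not] at hx ⊢
    · exact pB_S_smul x hx
    · exact pB_T_smul x hx
    · exact pA_S_smul x hx
    · exact pA_T_smul x hx
  · -- hX
    intro i
    rintro x ⟨y, hy, rfl⟩
    cases i <;>
      simp only [Bool.false_eq_true, if_true, if_false, Set.mem_compl_iff,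
        Set.mem_setOf_eq, not_not] at hy ⊢ <;> exact hy
  · -- hY
    intro i
    rintro x ⟨y, hy, rfl⟩
    cases i <;>
      simp only [Bool.false_eq_true, if_true, if_false, Pi.inv_apply, Set.mem_compl_iff,
        Set.mem_setOf_eq, smul_inv_smul] at hy ⊢ <;> exact hy

lemma exists_shift : ∀ (m x : ℤ), m ≠ 0 → (x + m) % 2 = 1 →
    ∃ k : ℤ, (x + 2 * k * m).natAbs < m.natAbs := by
  have pos : ∀ (m x : ℤ), 0 < m → (x + m) % 2 = 1 →
      ∃ k : ℤ, (x + 2 * k * m).natAbs < m.natAbs := by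
    intro m x hm hpar
    set q := x / (2 * m) with hqdef
    set r := x % (2 * m) with hrdef
    have hq : 2 * m * q + r = x := Int.mul_ediv_add_emod x (2 * m)
    have h0 : 0 ≤ r := Int.emod_nonneg x (by linarith)
    have hlt : r < 2 * m := Int.emod_lt_of_pos x (by linarith)
    have e1 : x + 2 * (-q) * m = r := by linear_combination -hq
    have e2 : x + 2 * (-q - 1) * m = r - 2 * m := by linear_combination -hq
    obtain ⟨t, ht⟩ : ∃ t, x = 2 * t + r := ⟨m * q, by linarith [hq]⟩
    rcases lt_or_ge r m with h | h
    · exact ⟨-q, by rw [e1]; omega⟩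
    · exact ⟨-q - 1, by rw [e2]; omega⟩
  intro m x hm hpar
  rcases lt_trichotomy m 0 with h | h | h
  · obtain ⟨k, hk⟩ := pos (-m) x (by linarith) (by omega)
    refine ⟨-k, ?_⟩
    have e : x + 2 * (-k) * m = x + 2 * k * (-m) := by ring
    rw [e]
    simpa using hk
  · exact absurd h hm
  · exact pos m x h hpar

lemma mem_ker_parity {A : SLZ}
    (h : A ∈ (Matrix.SpecialLinearGroup.map (Int.castRingHom (ZMod 2))).ker) :
    A.1 0 0 % 2 = 1 ∧ A.1 0 1 % 2 = 0 ∧ A.1 1 0 % 2 = 0 ∧ A.1 1 1 % 2 = 1 := by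
  rw [MonoidHom.mem_ker] at h
  have h' := congrArg (Subtype.val) h
  rw [Matrix.SpecialLinearGroup.map_apply_coe, Matrix.SpecialLinearGroup.coe_one] at h'
  have key : ∀ i j : Fin 2, ((A.1 i j : ℤ) : ZMod 2) = (1 : Matrix (Fin 2) (Fin 2) (ZMod 2)) i j := by
    intro i j
    rw [← congr_fun₂ h' i j]
    simp [RingHom.mapMatrix_apply, Matrix.map_apply]
  have conv : ∀ i j : Fin 2, ∀ b : ℤ, ((1 : Matrix (Fin 2) (Fin 2) (ZMod 2)) i j = ((b : ℤ) : ZMod 2)) → A.1 i j % 2 = b % 2 := by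
    intro i j b hb
    have := (key i j).trans hb
    rwa [ZMod.intCast_eq_intCast_iff] at this
  refine ⟨conv 0 0 1 (by norm_num), conv 0 1 0 (by norm_num), conv 1 0 0 (by norm_num), conv 1 1 1 (by norm_num)⟩

lemma TT_mem_ker : TT ∈ (Matrix.SpecialLinearGroup.map (Int.castRingHom (ZMod 2))).ker := by
  rw [MonoidHom.mem_ker]
  apply Subtype.ext
  rw [Matrix.SpecialLinearGroup.map_apply_coe, Matrix.SpecialLinearGroup.coe_one]
  ext i j
  fin_cases i <;> fin_cases j <;>
    simp [TT, RingHom.mapMatrix_apply, Matrix.map_apply, Matrix.one_apply] <;> decide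

lemma SS_mem_ker : SS ∈ (Matrix.SpecialLinearGroup.map (Int.castRingHom (ZMod 2))).ker := by
  rw [MonoidHom.mem_ker]
  apply Subtype.ext
  rw [Matrix.SpecialLinearGroup.map_apply_coe, Matrix.SpecialLinearGroup.coe_one]
  ext i j
  fin_cases i <;> fin_cases j <;>
    simp [SS, RingHom.mapMatrix_apply, Matrix.map_apply, Matrix.one_apply] <;> decide

lemma TT_inv : TT⁻¹ = (⟨!![1, -2; 0, 1], by decide⟩ : SLZ) := by
  apply inv_eq_of_mul_eq_one_right
  apply Subtype.ext
  show (TT : Matrix (Fin 2) (Fin 2) ℤ) * _ = _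
  show (!![1, 2; 0, 1] : Matrix (Fin 2) (Fin 2) ℤ) * !![1, -2; 0, 1] = _
  rw [Matrix.mul_fin_two, Matrix.SpecialLinearGroup.coe_one]
  norm_num
  decide

lemma SS_inv : SS⁻¹ = (⟨!![1, 0; 2, 1], by decide⟩ : SLZ) := by
  apply inv_eq_of_mul_eq_one_right
  apply Subtype.ext
  show (SS : Matrix (Fin 2) (Fin 2) ℤ) * _ = _
  show (!![1, 0; -2, 1] : Matrix (Fin 2) (Fin 2) ℤ) * !![1, 0; 2, 1] = _
  rw [Matrix.mul_fin_two, Matrix.SpecialLinearGroup.coe_one]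
  norm_num
  decide

lemma coe_T_zpow (m : ℤ) : ((TT ^ m : SLZ) : Matrix (Fin 2) (Fin 2) ℤ) = !![1, 2 * m; 0, 1] := by
  induction m using Int.induction_on with
  | zero => rw [zpow_zero, Matrix.SpecialLinearGroup.coe_one]; norm_num; decide
  | succ k ih =>
    rw [_root_.zpow_add_one, Matrix.SpecialLinearGroup.coe_mul, ih]
    show _ * (!![1, 2; 0, 1] : Matrix (Fin 2) (Fin 2) ℤ) = _
    rw [Matrix.mul_fin_two]
    ext i j
    fin_cases i <;> fin_cases j <;> simp <;> ring
  | pred k ih =>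
    rw [_root_.zpow_sub_one, Matrix.SpecialLinearGroup.coe_mul, ih, TT_inv]
    show _ * (!![1, -2; 0, 1] : Matrix (Fin 2) (Fin 2) ℤ) = _
    rw [Matrix.mul_fin_two]
    ext i j
    fin_cases i <;> fin_cases j <;> simp <;> ring

lemma coe_S_zpow (m : ℤ) : ((SS ^ m : SLZ) : Matrix (Fin 2) (Fin 2) ℤ) = !![1, 0; -2 * m, 1] := by
  induction m using Int.induction_on with
  | zero => rw [zpow_zero, Matrix.SpecialLinearGroup.coe_one]; norm_num; decide
  | succ k ih =>
    rw [_root_.zpow_add_one, Matrix.SpecialLinearGroup.coe_mul, ih]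
    show _ * (!![1, 0; -2, 1] : Matrix (Fin 2) (Fin 2) ℤ) = _
    rw [Matrix.mul_fin_two]
    ext i j
    fin_cases i <;> fin_cases j <;> simp <;> ring
  | pred k ih =>
    rw [_root_.zpow_sub_one, Matrix.SpecialLinearGroup.coe_mul, ih, SS_inv]
    show _ * (!![1, 0; 2, 1] : Matrix (Fin 2) (Fin 2) ℤ) = _
    rw [Matrix.mul_fin_two]
    ext i j
    fin_cases i <;> fin_cases j <;> simp <;> ring

lemma gen_aux (n : ℕ) : ∀ A : SLZ,
    A ∈ (Matrix.SpecialLinearGroup.map (Int.castRingHom (ZMod 2))).ker →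
    (A.1 0 0).natAbs + (A.1 1 0).natAbs ≤ n →
    A ∈ Subgroup.closure {TT, SS, (-1 : SLZ)} := by
  induction n using Nat.strong_induction_on with
  | _ n ih =>
    intro A hA hm
    obtain ⟨ha, hb, hc, hd⟩ := mem_ker_parity hA
    have hdet : A.1 0 0 * A.1 1 1 - A.1 0 1 * A.1 1 0 = 1 := by
      rw [← Matrix.det_fin_two]; exact A.2
    have hTmem : TT ∈ Subgroup.closure {TT, SS, (-1 : SLZ)} :=
      Subgroup.subset_closure (by simp)
    have hSmem : SS ∈ Subgroup.closure {TT, SS, (-1 : SLZ)} :=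
      Subgroup.subset_closure (by simp)
    have hNmem : (-1 : SLZ) ∈ Subgroup.closure {TT, SS, (-1 : SLZ)} :=
      Subgroup.subset_closure (by simp)
    by_cases hc0 : A.1 1 0 = 0
    · -- c = 0
      rw [hc0] at hdet
      simp only [mul_zero, sub_zero] at hdet
      rcases Int.mul_eq_one_iff_eq_one_or_neg_one.mp hdet with ⟨h1, h2⟩ | ⟨h1, h2⟩
      · obtain ⟨m, hbm⟩ : ∃ m, A.1 0 1 = 2 * m := ⟨A.1 0 1 / 2, by omega⟩
        have : A = TT ^ m := by
          apply Subtype.ext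
          rw [coe_T_zpow, Matrix.eta_fin_two A.1, h1, h2, hc0, hbm]
        rw [this]
        exact zpow_mem hTmem _
      · obtain ⟨m, hbm⟩ : ∃ m, A.1 0 1 = 2 * m := ⟨A.1 0 1 / 2, by omega⟩
        have : A = (-1 : SLZ) * TT ^ (-m) := by
          apply Subtype.ext
          rw [Matrix.SpecialLinearGroup.coe_mul, Matrix.SpecialLinearGroup.coe_neg,
            Matrix.SpecialLinearGroup.coe_one, coe_T_zpow, Matrix.eta_fin_two A.1,
            h1, h2, hc0, hbm]
          ext i j
          fin_cases i <;> fin_cases j <;> simp <;> ring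
        rw [this]
        exact mul_mem hNmem (zpow_mem hTmem _)
    · -- c ≠ 0
      have hanc : (A.1 0 0).natAbs ≠ (A.1 1 0).natAbs := by omega
      rcases lt_or_gt_of_ne hanc with hlt | hgt
      · -- |a| < |c| : S-step
        obtain ⟨k, hk⟩ := exists_shift (A.1 0 0) (A.1 1 0) (by omega) (by omega)
        set A' := SS ^ (-k) * A with hA'def
        have hcoe : (A' : Matrix (Fin 2) (Fin 2) ℤ) =
            !![A.1 0 0, A.1 0 1; A.1 1 0 + 2 * k * A.1 0 0, A.1 1 1 + 2 * k * A.1 0 1] := by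
          rw [hA'def, Matrix.SpecialLinearGroup.coe_mul, coe_S_zpow, Matrix.eta_fin_two A.1,
            Matrix.mul_fin_two]
          ext i j
          fin_cases i <;> fin_cases j <;> simp <;> ring
        have hA' : A' ∈ (Matrix.SpecialLinearGroup.map (Int.castRingHom (ZMod 2))).ker :=
          mul_mem (zpow_mem SS_mem_ker _) hA
        have hm' : (A'.1 0 0).natAbs + (A'.1 1 0).natAbs < n := by
          have e0 : A'.1 0 0 = A.1 0 0 := by rw [hcoe]; simp
          have e1 : A'.1 1 0 = A.1 1 0 + 2 * k * A.1 0 0 := by rw [hcoe]; simp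
          rw [e0, e1]
          omega
        have hmem' := ih _ hm' A' hA' (le_refl _)
        have : A = SS ^ k * A' := by
          rw [hA'def, ← mul_assoc, ← _root_.zpow_add, add_neg_cancel, zpow_zero, one_mul]
        rw [this]
        exact mul_mem (zpow_mem hSmem _) hmem'
      · -- |a| > |c| : T-step
        obtain ⟨k, hk⟩ := exists_shift (A.1 1 0) (A.1 0 0) (by omega) (by omega)
        set A' := TT ^ k * A with hA'def
        have hcoe : (A' : Matrix (Fin 2) (Fin 2) ℤ) =
            !![A.1 0 0 + 2 * k * A.1 1 0, A.1 0 1 + 2 * k * A.1 1 1; A.1 1 0, A.1 1 1] := by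
          rw [hA'def, Matrix.SpecialLinearGroup.coe_mul, coe_T_zpow, Matrix.eta_fin_two A.1,
            Matrix.mul_fin_two]
          ext i j
          fin_cases i <;> fin_cases j <;> simp <;> ring
        have hA' : A' ∈ (Matrix.SpecialLinearGroup.map (Int.castRingHom (ZMod 2))).ker :=
          mul_mem (zpow_mem TT_mem_ker _) hA
        have hm' : (A'.1 0 0).natAbs + (A'.1 1 0).natAbs < n := by
          have e0 : A'.1 0 0 = A.1 0 0 + 2 * k * A.1 1 0 := by rw [hcoe]; simp
          have e1 : A'.1 1 0 = A.1 1 0 := by rw [hcoe]; simp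
          rw [e0, e1]
          omega
        have hmem' := ih _ hm' A' hA' (le_refl _)
        have : A = TT ^ (-k) * A' := by
          rw [hA'def, ← mul_assoc, ← _root_.zpow_add, neg_add_cancel, zpow_zero, one_mul]
        rw [this]
        exact mul_mem (zpow_mem hTmem _) hmem'

theorem congruence_subgroup_level_two_free :
    let Γ₂ : Subgroup (Matrix.SpecialLinearGroup (Fin 2) ℤ) :=
      (Matrix.SpecialLinearGroup.map (Int.castRingHom (ZMod 2))).ker
    let T : Matrix.SpecialLinearGroup (Fin 2) ℤ := ⟨!![1, 2; 0, 1], by decide⟩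
    let S : Matrix.SpecialLinearGroup (Fin 2) ℤ := ⟨!![1, 0; -2, 1], by decide⟩
    let π : Matrix.SpecialLinearGroup (Fin 2) ℤ →*
        Matrix.ProjectiveSpecialLinearGroup (Fin 2) ℤ :=
      QuotientGroup.mk' (Subgroup.center (Matrix.SpecialLinearGroup (Fin 2) ℤ))
    T ∈ Γ₂ ∧ S ∈ Γ₂ ∧
    (Γ₂ ≤ Subgroup.closure {T, S, -1}) ∧
    Function.Injective
      (FreeGroup.lift (fun b : Bool => if b then π T else π S) :
        FreeGroup Bool →* Matrix.ProjectiveSpecialLinearGroup (Fin 2) ℤ) := by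
  intro Γ₂ T S π
  refine ⟨TT_mem_ker, SS_mem_ker, ?_, ?_⟩
  · intro A hA
    exact gen_aux ((A.1 0 0).natAbs + (A.1 1 0).natAbs) A hA le_rfl
  · exact free_part
end

section
/- Let t : ℚ ∪ {∞} → ℝ_{≥2} arise as a trace function on the set of simple closed curves on the one-holed torus with boundary trace β ≥ 2, i.e., suppose x = t(α₁), y = t(α₂), z = t(α₃) are reals ≥ 2 satisfying x·y·z = x² + y² + z² + β - 2 for some β ≥ 2. Then the other solution z' of the quadratic w² - x·y·w + x² + y² + β - 2 = 0 satisfies z + z' = x·y and z·z' = x² + y² + β - 2, and z' is also a real number ≥ 2. -/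
theorem fricke_quadratic_other_root (x y z β z' : ℝ)
    (hx : 2 ≤ x) (hy : 2 ≤ y) (hz : 2 ≤ z) (hβ : 2 ≤ β)
    (hfricke : x * y * z = x ^ 2 + y ^ 2 + z ^ 2 + β - 2)
    (hz' : z + z' = x * y) :
    z * z' = x ^ 2 + y ^ 2 + β - 2 ∧ 2 ≤ z' := by
  have hzz' : z' = x * y - z := by linarith
  have h1 : z * z' = x ^ 2 + y ^ 2 + β - 2 := by
    subst hzz'; nlinarith [hfricke]
  refine ⟨h1, ?_⟩
  have h2 : (2 - z) * (2 - z') = (x - y) ^ 2 + β + 2 := by nlinarith [h1]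
  have h3 : z * z' ≥ 8 := by nlinarith [sq_nonneg x, sq_nonneg y]
  nlinarith [h2, h3, sq_nonneg (x - y), sq_nonneg (z - z'), mul_pos (by linarith : (0:ℝ) < z) (by linarith : (0:ℝ) < z)]
end

section
/- Suppose f(α₁), f(α₂), f(α₃) are nonnegative reals satisfying the tropical Fricke relation f(α₁) + f(α₂) + f(α₃) = max(2·f(α₁), 2·f(α₂), 2·f(α₃), c) for a nonnegative real c (intersection with the boundary of the one-holed torus), and define f(α₃') by f(α₃) + f(α₃') = max(2·f(α₁), 2·f(α₂), c). Then f(α₃') is nonnegative and the triple (f(α₁), f(α₂), f(α₃')) again satisfies f(α₁) + f(α₂) + f(α₃') = max(2·f(α₁), 2·f(α₂), 2·f(α₃'), c). -/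
theorem tropical_fricke_relation_preserved (a b c₃ c c₃' : ℝ)
    (ha : 0 ≤ a) (hb : 0 ≤ b) (hc₃ : 0 ≤ c₃) (hc : 0 ≤ c)
    (hfricke : a + b + c₃ = max (max (max (2 * a) (2 * b)) (2 * c₃)) c)
    (hc₃' : c₃ + c₃' = max (max (2 * a) (2 * b)) c) :
    0 ≤ c₃' ∧ a + b + c₃' = max (max (max (2 * a) (2 * b)) (2 * c₃')) c := by
  set M := max (max (2 * a) (2 * b)) c with hMdef
  have hM : a + b + c₃ = max M (2 * c₃) := by
    rw [hfricke, hMdef, sup_right_comm]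
  have hMa : 2 * a ≤ M := le_max_of_le_left (le_max_left _ _)
  have hMb : 2 * b ≤ M := le_max_of_le_left (le_max_right _ _)
  have hMc : c ≤ M := le_max_right _ _
  rcases le_total (2 * c₃) M with h | h
  · -- max M (2c₃) = M
    have h1 : a + b + c₃ = M := by rw [hM, max_eq_left h]
    have hc₃'eq : c₃' = a + b := by linarith [hc₃']
    constructor
    · linarith
    · have h2 : M ≤ 2 * (a + b) := by linarith
      rw [hc₃'eq]
      rw [sup_right_comm]
      rw [max_eq_right (by linarith : M ≤ 2 * (a + b))]
      ring
  · have h1 : a + b + c₃ = 2 * c₃ := by rw [hM, max_eq_right h]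
    have hc₃ab : c₃ = a + b := by linarith
    have hc₃'eq : c₃' = M - c₃ := by linarith [hc₃']
    have h2 : a + b ≤ M := by linarith
    constructor
    · linarith
    · have h3 : 2 * c₃' ≤ M := by rw [hc₃'eq]; linarith
      rw [sup_right_comm, max_eq_left h3]
      linarith
end
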